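/- arXiv:1505.00125 — 2 statements merged into one kernel-verified Lean document; each statement's English description precedes it below -/
import Mathlib

section
/- (Forward direction of Lemma 2.3.6 of Breuil–Herzig, as Lemma 3.3 of the paper.) Let d ≥ 1, let C ⊆ R⁺ = {(i,j) : 1 ≤ i < j ≤ d} be a closed subset, and let S be a commutative ring. Suppose σ ∈ S_d is a permutation belonging to W_C, i.e. σ⁻¹(i) < σ⁻¹(j) for every (i,j) ∈ C. Then for every matrix A ∈ B_C(S), the conjugate w_σ⁻¹ · A · w_σ is an upper triangular matrix. -/
/-- A subset `C` of the positive roots `R⁺ = {(i,j) : i < j}` of `GL_d` is *closed* if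
`(i,j) ∈ C` and `(j,k) ∈ C` imply `(i,k) ∈ C`. -/
def IsClosedRootSubset {d : ℕ} (C : Set (Fin d × Fin d)) : Prop :=
  (∀ p ∈ C, p.1 < p.2) ∧
    ∀ i j k : Fin d, (i, j) ∈ C → (j, k) ∈ C → (i, k) ∈ C

/-- Membership in `B_C(S)`: a `d × d` matrix over `S` whose diagonal entries are units
and whose off-diagonal `(i,j)`-entries vanish whenever `(i,j) ∉ C`. -/
def MemBC {d : ℕ} {S : Type*} [CommRing S] (C : Set (Fin d × Fin d))
    (A : Matrix (Fin d) (Fin d) S) : Prop :=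
  (∀ i : Fin d, IsUnit (A i i)) ∧
    ∀ i j : Fin d, i ≠ j → (i, j) ∉ C → A i j = 0

/-- The permutation matrix `w_σ` with entries `(w_σ)_{ij} = δ_{i, σ(j)}`. -/
def permMat {d : ℕ} (S : Type*) [CommRing S] (σ : Equiv.Perm (Fin d)) :
    Matrix (Fin d) (Fin d) S :=
  Matrix.of fun i j => if i = σ j then 1 else 0


lemma permMat_mul_permMat {d : ℕ} (S : Type*) [CommRing S] (σ τ : Equiv.Perm (Fin d)) :
    permMat S σ * permMat S τ = permMat S (σ * τ) := by
  ext i j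
  simp only [permMat, Matrix.mul_apply, Matrix.of_apply]
  rw [Finset.sum_eq_single (τ j)]
  · simp [Equiv.Perm.mul_apply]
    congr
  · intro b _ hb
    simp [hb]
  · simp

lemma permMat_one {d : ℕ} (S : Type*) [CommRing S] :
    permMat S (1 : Equiv.Perm (Fin d)) = 1 := by
  ext i j
  simp [permMat, Matrix.one_apply, eq_comm]
  congr

lemma permMat_inv {d : ℕ} (S : Type*) [CommRing S] (σ : Equiv.Perm (Fin d)) :
    (permMat S σ)⁻¹ = permMat S σ⁻¹ := by
  apply Matrix.inv_eq_right_inv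
  rw [permMat_mul_permMat, mul_inv_cancel, permMat_one]

lemma conj_entry {d : ℕ} (S : Type*) [CommRing S] (σ : Equiv.Perm (Fin d))
    (A : Matrix (Fin d) (Fin d) S) (i j : Fin d) :
    ((permMat S σ)⁻¹ * A * permMat S σ) i j = A (σ i) (σ j) := by
  rw [permMat_inv]
  simp only [permMat, Matrix.mul_apply, Matrix.of_apply]
  rw [Finset.sum_eq_single (σ j)]
  · rw [Finset.sum_eq_single (σ i)]
    · simp
    · intro b _ hb
      by_cases h : i = σ⁻¹ b
      · exact absurd (by rw [h]; simp) hb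
      · simp [h]
        exact fun h' => absurd h' h
    · simp
  · intro b _ hb
    simp [hb]
  · simp

/-- forward direction of Breuil–Herzig, Lem. 2.3.6: if `σ ∈ W_C`,
i.e. `σ⁻¹(i) < σ⁻¹(j)` for all `(i,j) ∈ C`, then for every `A ∈ B_C(S)` the conjugate
`w_σ⁻¹ · A · w_σ` is upper triangular. -/
theorem conj_BC_upperTriangular {d : ℕ} (hd : 1 ≤ d) (C : Set (Fin d × Fin d))
    (hC : IsClosedRootSubset C) (S : Type*) [CommRing S]
    (σ : Equiv.Perm (Fin d)) (hσ : ∀ p ∈ C, σ⁻¹ p.1 < σ⁻¹ p.2)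
    (A : Matrix (Fin d) (Fin d) S) (hA : MemBC C A) :
    ∀ i j : Fin d, j < i → ((permMat S σ)⁻¹ * A * permMat S σ) i j = 0 := by
  intro i j hji
  rw [conj_entry]
  have hne : σ i ≠ σ j := fun h => absurd (σ.injective h) (ne_of_gt hji)
  apply hA.2 _ _ hne
  intro hmem
  have := hσ _ hmem
  simp at this
  exact absurd this (not_lt.2 hji.le)
end

section
/- (Matrix form of Proposition 4.3.) Let k be a field, let d ≥ 1, let t_1, …, t_d be pairwise distinct nonnegative integers, and let r_1 < r_2 < … < r_d denote the increasing rearrangement of t_1, …, t_d. Set C := {(i,j) : 1 ≤ i < j ≤ d and t_i < t_j}. Let A be a d×d matrix over the polynomial ring k[u] which is upper triangular, whose diagonal entries are A_{ii} = a_i·u^{t_i} with a_i ∈ k nonzero, and which satisfies A_{ij} = 0 whenever i < j and t_i > t_j (i.e. A ∈ B_C(k[u]) up to the diagonal not being a unit). Then there exists a unique permutation σ ∈ W_C such that the conjugate w_σ⁻¹ · A · w_σ is upper triangular with diagonal equal to (a_{σ(1)}·u^{r_1}, a_{σ(2)}·u^{r_2}, …, a_{σ(d)}·u^{r_d}). 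-/
lemma mul_permMat_apply {d : ℕ} {S : Type*} [CommRing S] (σ : Equiv.Perm (Fin d))
    (A : Matrix (Fin d) (Fin d) S) (i j : Fin d) :
    (A * permMat S σ) i j = A i (σ j) := by
  simp [Matrix.mul_apply, permMat, mul_ite]

lemma permMat_mul_apply {d : ℕ} {S : Type*} [CommRing S] (σ : Equiv.Perm (Fin d))
    (A : Matrix (Fin d) (Fin d) S) (i j : Fin d) :
    (permMat S σ * A) i j = A (σ⁻¹ i) j := by
  rw [Matrix.mul_apply]
  rw [Finset.sum_eq_single (σ⁻¹ i)]
  · simp [permMat]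
  · intro b _ hb
    have : i ≠ σ b := by
      intro h; exact hb (by simp [h])
    simp [permMat, this]
  · simp

lemma conj_permMat_apply {d : ℕ} {S : Type*} [CommRing S] (σ : Equiv.Perm (Fin d))
    (A : Matrix (Fin d) (Fin d) S) (i j : Fin d) :
    ((permMat S σ)⁻¹ * A * permMat S σ) i j = A (σ i) (σ j) := by
  rw [mul_permMat_apply, permMat_inv, permMat_mul_apply]
  simp

/-- matrix form of Prop. 4.3: let `k` be a field, `t_1, …, t_d` pairwise
distinct nonnegative integers with increasing rearrangement `r_1 < … < r_d`, and
`C = {(i,j) : i < j and t_i < t_j}`. If `A` over `k[u]` is upper triangular with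
diagonal entries `A_{ii} = a_i·u^{t_i}` (`a_i ∈ k` nonzero) and `A_{ij} = 0` whenever
`i < j` and `t_i > t_j`, then there is a unique permutation `σ ∈ W_C` such that
`w_σ⁻¹ · A · w_σ` is upper triangular with diagonal `(a_{σ(1)}·u^{r_1}, …, a_{σ(d)}·u^{r_d})`. -/
theorem exists_unique_perm_conj_upperTriangular {d : ℕ} (hd : 1 ≤ d)
    (k : Type*) [Field k] (t : Fin d → ℕ) (ht : Function.Injective t)
    (r : Fin d → ℕ) (hr_mono : StrictMono r)
    (hr_rearrange : ∃ π : Equiv.Perm (Fin d), ∀ i, r i = t (π i))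
    (C : Set (Fin d × Fin d))
    (hC : C = {p : Fin d × Fin d | p.1 < p.2 ∧ t p.1 < t p.2})
    (a : Fin d → k) (ha : ∀ i, a i ≠ 0)
    (A : Matrix (Fin d) (Fin d) (Polynomial k))
    (hA_upper : ∀ i j : Fin d, j < i → A i j = 0)
    (hA_diag : ∀ i : Fin d, A i i = Polynomial.C (a i) * Polynomial.X ^ (t i))
    (hA_zero : ∀ i j : Fin d, i < j → t j < t i → A i j = 0) :
    ∃! σ : Equiv.Perm (Fin d),
      (∀ p ∈ C, σ⁻¹ p.1 < σ⁻¹ p.2) ∧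
      (∀ i j : Fin d, j < i →
        ((permMat (Polynomial k) σ)⁻¹ * A * permMat (Polynomial k) σ) i j = 0) ∧
      (∀ i : Fin d,
        ((permMat (Polynomial k) σ)⁻¹ * A * permMat (Polynomial k) σ) i i =
          Polynomial.C (a (σ i)) * Polynomial.X ^ (r i)) := by
  obtain ⟨π, hπ⟩ := hr_rearrange
  refine ⟨π, ⟨?_, ?_, ?_⟩, ?_⟩
  · rintro ⟨i, j⟩ hp
    rw [hC] at hp
    simp only [Set.mem_setOf_eq] at hp
    obtain ⟨hlt, hij⟩ := hp
    by_contra hle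
    push_neg at hle
    rcases lt_or_eq_of_le hle with h | h
    · have h2 := hr_mono h
      rw [hπ, hπ, Equiv.Perm.coe_inv, Equiv.apply_symm_apply, Equiv.apply_symm_apply] at h2
      exact absurd h2 (not_lt.mpr hij.le)
    · have : j = i := by simpa using congrArg π h
      exact absurd this (ne_of_gt hlt)
  · intro i j hji
    rw [conj_permMat_apply]
    rcases lt_trichotomy (π i) (π j) with h | h | h
    · apply hA_zero _ _ h
      have : r j < r i := hr_mono hji
      rw [hπ, hπ] at this
      omega
    · exact absurd (π.injective h) (by omega)
    · exact hA_upper _ _ h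
  · intro i
    rw [conj_permMat_apply, hA_diag, hπ]
  · intro τ ⟨_, _, hdiag⟩
    ext i : 1
    apply ht
    have h1 := hdiag i
    rw [conj_permMat_apply, hA_diag] at h1
    have h2 := congrArg Polynomial.natDegree h1
    rw [Polynomial.natDegree_C_mul_X_pow _ _ (ha _),
        Polynomial.natDegree_C_mul_X_pow _ _ (ha _)] at h2
    rw [h2, hπ]
end
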